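/- Let D- be a canonical negative Boolean automaton double-cycle with both cycle sizes n and m even, n,m ≥ 2. Then the maximally expressive configuration ((10)^{n/2}, (10)^{m/2}) is reachable from ((10)^{n/2}, 1^m) by a sequence of at most (m-2)(n+m-2) + (2m-1) asynchronous single-automaton updates. -/

import Mathlib

/-- A configuration of a Boolean automaton double-cycle with cycles of sizes `n`
and `m`: the shared automaton `c` is index 0 of both cycles (so valid
configurations satisfy `x.1 0 = x.2 0`). -/
abbrev Cfg (n m : ℕ) := (Fin n → Bool) × (Fin m → Bool)

/-- One asynchronous single-automaton update in a double-cycle whose shared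
automaton `c` computes `fc`; every non-shared automaton copies its predecessor. -/
inductive Step {n m : ℕ} (fc : Cfg n m → Bool) : Cfg n m → Cfg n m → Prop
  | left (x : Cfg n m) (i : Fin n) (hi : 1 ≤ i.val) :
      Step fc x (Function.update x.1 i (x.1 ⟨i.val - 1, by have := i.isLt; omega⟩), x.2)
  | right (x : Cfg n m) (j : Fin m) (hj : 1 ≤ j.val) :
      Step fc x (x.1, Function.update x.2 j (x.2 ⟨j.val - 1, by have := j.isLt; omega⟩))
  | center (x : Cfg n m) (i : Fin n) (j : Fin m) (hi : i.val = 0) (hj : j.val = 0) :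
      Step fc x (Function.update x.1 i (fc x), Function.update x.2 j (fc x))

/-- `Steps fc k x y`: configuration `y` is obtained from `x` by exactly `k`
asynchronous single-automaton updates. -/
def Steps {n m : ℕ} (fc : Cfg n m → Bool) : ℕ → Cfg n m → Cfg n m → Prop
  | 0, x, y => x = y
  | k + 1, x, y => ∃ z, Step fc x z ∧ Steps fc k z y

namespace DCaux

variable {n m : ℕ}

lemma fapp {k : ℕ} {f : Fin k → Bool} {a b : Fin k} (h : a.val = b.val) : f a = f b :=
  congrArg f (Fin.ext h)

lemma steps_append {fc : Cfg n m → Bool} :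
    ∀ {a b : ℕ} {x y z : Cfg n m}, Steps fc a x y → Steps fc b y z → Steps fc (a + b) x z := by
  intro a
  induction a with
  | zero =>
    intro b x y z h1 h2
    obtain rfl : x = y := h1
    simpa using h2
  | succ a ih =>
    intro b x y z h1 h2
    obtain ⟨w, hw, hs⟩ := h1
    have h3 : Steps fc (a + b + 1) x z := ⟨w, hw, ih hs h2⟩
    have he : a + b + 1 = a + 1 + b := by omega
    rwa [he] at h3

lemma step_steps {fc : Cfg n m → Bool} {x y : Cfg n m} (h : Step fc x y) :
    Steps fc 1 x y := ⟨y, h, rfl⟩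

lemma steps_snoc {fc : Cfg n m → Bool} {a : ℕ} {x y z : Cfg n m}
    (h1 : Steps fc a x y) (h2 : Step fc y z) : Steps fc (a + 1) x z :=
  steps_append h1 (step_steps h2)

/-- Updating left indices n-1, n-2, ..., n-k (descending) shifts that suffix. -/
lemma shift_left (fc : Cfg n m → Bool) (hn : 2 ≤ n) (x : Cfg n m) :
    ∀ k, k ≤ n - 1 →
    Steps fc k x
      ((fun i : Fin n => if n - 1 - k < i.val then x.1 ⟨i.val - 1, by have := i.isLt; omega⟩
          else x.1 i), x.2) := by
  intro k
  induction k with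
  | zero =>
    intro _
    show x = _
    refine Prod.ext ?_ rfl
    funext i
    simp only
    rw [if_neg (by have := i.isLt; omega)]
  | succ k ih =>
    intro hk
    have h1 := ih (by omega)
    have hlt : n - 1 - k < n := by omega
    have h2 := Step.left (fc := fc)
      ((fun i : Fin n => if n - 1 - k < i.val then x.1 ⟨i.val - 1, by have := i.isLt; omega⟩
          else x.1 i), x.2) ⟨n - 1 - k, hlt⟩ (by show 1 ≤ n - 1 - k; omega)
    have h3 := steps_snoc h1 h2
    have heq :
        (Function.update
          (fun i : Fin n => if n - 1 - k < i.val then x.1 ⟨i.val - 1, by have := i.isLt; omega⟩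
            else x.1 i) ⟨n - 1 - k, hlt⟩
          ((fun i : Fin n => if n - 1 - k < i.val then x.1 ⟨i.val - 1, by have := i.isLt; omega⟩
            else x.1 i) ⟨n - 1 - k - 1, by omega⟩), x.2) =
        ((fun i : Fin n => if n - 1 - (k+1) < i.val then x.1 ⟨i.val - 1, by have := i.isLt; omega⟩
          else x.1 i), x.2) := by
      refine Prod.ext ?_ rfl
      funext i
      simp only [Function.update_apply, Fin.ext_iff, Fin.val_mk]
      split_ifs <;>
        first
          | rfl
          | omega
          | exact fapp (by simp only [Fin.val_mk]; omega)
          | exact (fapp (by simp only [Fin.val_mk]; omega)).symm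
    rwa [heq] at h3

/-- Updating right indices m-2, ..., m-1-k (descending) shifts that interior segment. -/
lemma shift_right (fc : Cfg n m → Bool) (hm : 2 ≤ m) (x : Cfg n m) :
    ∀ k, k ≤ m - 2 →
    Steps fc k x
      (x.1, fun j : Fin m => if m - 2 - k < j.val ∧ j.val ≤ m - 2 then
          x.2 ⟨j.val - 1, by have := j.isLt; omega⟩ else x.2 j) := by
  intro k
  induction k with
  | zero =>
    intro _
    show x = _
    refine Prod.ext rfl ?_
    funext j
    simp only
    rw [if_neg (by omega)]
  | succ k ih =>
    intro hk
    have h1 := ih (by omega)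
    have hlt : m - 2 - k < m := by omega
    have h2 := Step.right (fc := fc)
      (x.1, fun j : Fin m => if m - 2 - k < j.val ∧ j.val ≤ m - 2 then
          x.2 ⟨j.val - 1, by have := j.isLt; omega⟩ else x.2 j)
      ⟨m - 2 - k, hlt⟩ (by show 1 ≤ m - 2 - k; omega)
    have h3 := steps_snoc h1 h2
    have heq :
        ((x.1, fun j : Fin m => if m - 2 - k < j.val ∧ j.val ≤ m - 2 then
          x.2 ⟨j.val - 1, by have := j.isLt; omega⟩ else x.2 j).1,
         Function.update
          (fun j : Fin m => if m - 2 - k < j.val ∧ j.val ≤ m - 2 then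
            x.2 ⟨j.val - 1, by have := j.isLt; omega⟩ else x.2 j) ⟨m - 2 - k, hlt⟩
          ((fun j : Fin m => if m - 2 - k < j.val ∧ j.val ≤ m - 2 then
            x.2 ⟨j.val - 1, by have := j.isLt; omega⟩ else x.2 j) ⟨m - 2 - k - 1, by omega⟩)) =
        (x.1, fun j : Fin m => if m - 2 - (k+1) < j.val ∧ j.val ≤ m - 2 then
          x.2 ⟨j.val - 1, by have := j.isLt; omega⟩ else x.2 j) := by
      refine Prod.ext rfl ?_
      funext j
      simp only [Function.update_apply, Fin.ext_iff, Fin.val_mk]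
      split_ifs <;>
        first
          | rfl
          | omega
          | exact fapp (by simp only [Fin.val_mk]; omega)
          | exact (fapp (by simp only [Fin.val_mk]; omega)).symm
    rwa [heq] at h3

/-- Updating right indices 1, 2, ..., k (ascending) floods them with the value at 0. -/
lemma fill_right (fc : Cfg n m → Bool) (hm : 2 ≤ m) (x : Cfg n m) :
    ∀ k, k ≤ m - 1 →
    Steps fc k x
      (x.1, fun j : Fin m => if j.val ≤ k then x.2 ⟨0, by omega⟩ else x.2 j) := by
  intro k
  induction k with
  | zero =>
    intro _
    show x = _
    refine Prod.ext rfl ?_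
    funext j
    simp only
    by_cases hj : j.val ≤ 0
    · rw [if_pos hj]; exact (fapp (by simp only [Fin.val_mk]; omega)).symm
    · rw [if_neg hj]
  | succ k ih =>
    intro hk
    have h1 := ih (by omega)
    have hlt : k + 1 < m := by omega
    have h2 := Step.right (fc := fc)
      (x.1, fun j : Fin m => if j.val ≤ k then x.2 ⟨0, by omega⟩ else x.2 j)
      ⟨k + 1, hlt⟩ (by show 1 ≤ k + 1; omega)
    have h3 := steps_snoc h1 h2
    have heq :
        ((x.1, fun j : Fin m => if j.val ≤ k then x.2 ⟨0, by omega⟩ else x.2 j).1,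
         Function.update
          (fun j : Fin m => if j.val ≤ k then x.2 ⟨0, by omega⟩ else x.2 j) ⟨k + 1, hlt⟩
          ((fun j : Fin m => if j.val ≤ k then x.2 ⟨0, by omega⟩ else x.2 j)
            ⟨k + 1 - 1, by omega⟩)) =
        (x.1, fun j : Fin m => if j.val ≤ k + 1 then x.2 ⟨0, by omega⟩ else x.2 j) := by
      refine Prod.ext rfl ?_
      funext j
      simp only [Function.update_apply, Fin.ext_iff, Fin.val_mk]
      split_ifs <;>
        first
          | rfl
          | omega
          | exact fapp (by simp only [Fin.val_mk]; omega)
          | exact (fapp (by simp only [Fin.val_mk]; omega)).symm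
    rwa [heq] at h3

/-- The invariant state after the initial phase and `t` rotation rounds. -/
def Amid (n m t : ℕ) : Cfg n m :=
  (fun i => decide ((i.val + t) % 2 = 0),
   fun j => if j.val ≤ t then decide ((j.val + t) % 2 = 0) else false)

/-- State after the left shift inside a round. -/
def Bst (n m t : ℕ) : Cfg n m :=
  (fun i : Fin n => if i.val = 0 then decide (t % 2 = 0) else decide ((i.val + t + 1) % 2 = 0),
   (Amid n m t).2)

/-- State after the left and right shifts inside a round. -/
def Cst (n m t : ℕ) : Cfg n m :=
  ((Bst n m t).1,
   fun j : Fin m => if j.val = 0 then decide (t % 2 = 0)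
     else if j.val ≤ t + 1 ∧ j.val ≤ m - 2 then decide ((j.val + t + 1) % 2 = 0) else false)

lemma round (fc : Cfg n m → Bool) (hn : 2 ≤ n) (hm : 2 ≤ m) (hne : n % 2 = 0)
    (hfc : ∀ y : Cfg n m, fc y = (!(y.1 ⟨n - 1, Nat.sub_lt (by omega) one_pos⟩) && !(y.2 ⟨m - 1, by omega⟩)))
    (t : ℕ) (ht : t + 1 ≤ m - 2) :
    Steps fc (n + m - 2) (Amid n m t) (Amid n m (t + 1)) := by
  have h1 : Steps fc (n - 1) (Amid n m t) (Bst n m t) := by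
    have h := shift_left fc hn (Amid n m t) (n - 1) le_rfl
    unfold Bst
    convert h using 2
    funext i
    have hi := i.isLt
    simp only [Amid, Bst, Fin.val_mk]
    split_ifs <;>
      first | rfl | omega | exact decide_eq_decide.mpr (by omega)
  have h2 : Steps fc (m - 2) (Bst n m t) (Cst n m t) := by
    have h := shift_right fc hm (Bst n m t) (m - 2) le_rfl
    unfold Cst
    convert h using 2
    funext j
    have hj := j.isLt
    simp only [Amid, Bst, Cst, Fin.val_mk]
    split_ifs <;>
      first | rfl | omega | exact decide_eq_decide.mpr (by omega)
  have hv : fc (Cst n m t) = decide ((t + 1) % 2 = 0) := by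
    rw [hfc]
    simp only [Cst, Bst, Amid, Fin.val_mk]
    split_ifs <;>
      first
        | omega
        | (simp only [Bool.not_false, Bool.and_true, ← decide_not]
           exact decide_eq_decide.mpr (by omega))
  have h3 : Step fc (Cst n m t) (Amid n m (t + 1)) := by
    have h := Step.center (fc := fc) (Cst n m t) ⟨0, by omega⟩ ⟨0, by omega⟩ rfl rfl
    rw [hv] at h
    convert h using 1
    refine Prod.ext ?_ ?_ <;> funext i <;>
      · have hi := i.isLt
        simp only [Amid, Cst, Bst, Function.update_apply, Fin.ext_iff, Fin.val_mk]
        split_ifs <;>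
          first | rfl | omega | exact decide_eq_decide.mpr (by omega)
  have h := steps_snoc (steps_append h1 h2) h3
  have he : n - 1 + (m - 2) + 1 = n + m - 2 := by omega
  rwa [he] at h

lemma rounds (fc : Cfg n m → Bool) (hn : 2 ≤ n) (hm : 2 ≤ m) (hne : n % 2 = 0)
    (hfc : ∀ y : Cfg n m, fc y = (!(y.1 ⟨n - 1, Nat.sub_lt (by omega) one_pos⟩) && !(y.2 ⟨m - 1, by omega⟩))) :
    ∀ t, t ≤ m - 2 → Steps fc (t * (n + m - 2)) (Amid n m 0) (Amid n m t) := by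
  intro t
  induction t with
  | zero =>
    intro _
    rw [Nat.zero_mul]
    show Amid n m 0 = Amid n m 0
    rfl
  | succ t ih =>
    intro ht
    have h := steps_append (ih (by omega)) (round fc hn hm hne hfc t ht)
    have he : t * (n + m - 2) + (n + m - 2) = (t + 1) * (n + m - 2) := by ring
    rwa [he] at h

def startCfg (n m : ℕ) : Cfg n m := (fun i => decide (i.val % 2 = 0), fun _ => true)

def S1 (n m : ℕ) : Cfg n m :=
  (fun i : Fin n => if i.val = 0 then false else decide (i.val % 2 = 0),
   fun j : Fin m => if j.val = 0 then false else true)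

def S2 (n m : ℕ) : Cfg n m := ((S1 n m).1, fun _ => false)

lemma init (fc : Cfg n m → Bool) (hn : 2 ≤ n) (hm : 2 ≤ m) (hne : n % 2 = 0)
    (hfc : ∀ y : Cfg n m, fc y = (!(y.1 ⟨n - 1, Nat.sub_lt (by omega) one_pos⟩) && !(y.2 ⟨m - 1, by omega⟩))) :
    Steps fc (m + 1) (startCfg n m) (Amid n m 0) := by
  have hv0 : fc (startCfg n m) = false := by
    rw [hfc]; simp [startCfg]
  have s1 : Step fc (startCfg n m) (S1 n m) := by
    have h := Step.center (fc := fc) (startCfg n m) ⟨0, by omega⟩ ⟨0, by omega⟩ rfl rfl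
    rw [hv0] at h
    convert h using 1
    refine Prod.ext ?_ ?_ <;> funext i <;>
        simp only [startCfg, S1, Function.update_apply, Fin.ext_iff, Fin.val_mk] <;>
        split_ifs <;> first | rfl | omega
  have s2 : Steps fc (m - 1) (S1 n m) (S2 n m) := by
    have h := fill_right fc hm (S1 n m) (m - 1) le_rfl
    unfold S2
    convert h using 2
    funext j
    have hj := j.isLt
    simp only [S1, S2, Fin.val_mk]
    split_ifs <;> first | rfl | omega
  have hv2 : fc (S2 n m) = true := by
    rw [hfc]
    simp only [S2, S1, Fin.val_mk, Bool.not_false, Bool.and_true]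
    split_ifs <;>
      first
        | omega
        | (simp only [← decide_not, decide_eq_true_eq]; omega)
  have s3 : Step fc (S2 n m) (Amid n m 0) := by
    have h := Step.center (fc := fc) (S2 n m) ⟨0, by omega⟩ ⟨0, by omega⟩ rfl rfl
    rw [hv2] at h
    convert h using 1
    refine Prod.ext ?_ ?_ <;> funext i <;>
      · have hi := i.isLt
        simp only [Amid, S2, S1, Function.update_apply, Fin.ext_iff, Fin.val_mk]
        split_ifs <;>
          first
            | rfl
            | omega
            | (simp only [decide_eq_true_eq]; omega)
            | (symm; simp only [decide_eq_true_eq]; omega)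
  have h := steps_snoc (steps_append (step_steps s1) s2) s3
  have he : 1 + (m - 1) + 1 = m + 1 := by omega
  rwa [he] at h

lemma final_eq (hn : 2 ≤ n) (hm : 2 ≤ m) (hme : m % 2 = 0) :
    Amid n m (m - 2) =
      ((fun i => decide (i.val % 2 = 0), fun i => decide (i.val % 2 = 0)) : Cfg n m) := by
  refine Prod.ext ?_ ?_
  · funext i
    simp only [Amid]
    exact decide_eq_decide.mpr (by omega)
  · funext j
    have hj := j.isLt
    simp only [Amid]
    split_ifs with h
    · exact decide_eq_decide.mpr (by omega)
    · have h2 : j.val % 2 = 1 := by omega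
      rw [h2]
      rfl

end DCaux

/-- In a canonical negative double-cycle with both cycle sizes even, the maximally
expressive configuration ((10)^{n/2}, (10)^{m/2}) is reachable from
((10)^{n/2}, 1^m) in at most (m-2)(n+m-2) + (2m-1) asynchronous updates. -/
theorem stmt12 (n m : ℕ) (hn : 2 ≤ n) (hm : 2 ≤ m)
    (hne : n % 2 = 0) (hme : m % 2 = 0) :
    ∃ k ≤ (m - 2) * (n + m - 2) + (2 * m - 1),
      Steps (fun y : Cfg n m => !(y.1 ⟨n - 1, by omega⟩) && !(y.2 ⟨m - 1, by omega⟩))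
        k ((fun i => decide (i.val % 2 = 0), fun _ => true) : Cfg n m)
        ((fun i => decide (i.val % 2 = 0), fun i => decide (i.val % 2 = 0)) : Cfg n m) := by
  set fc : Cfg n m → Bool :=
    fun y : Cfg n m => !(y.1 ⟨n - 1, by omega⟩) && !(y.2 ⟨m - 1, by omega⟩) with hfcdef
  refine ⟨(m + 1) + (m - 2) * (n + m - 2), ?_, ?_⟩
  · calc (m + 1) + (m - 2) * (n + m - 2) = (m - 2) * (n + m - 2) + (m + 1) := Nat.add_comm _ _
      _ ≤ (m - 2) * (n + m - 2) + (2 * m - 1) := Nat.add_le_add_left (by omega) _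
  · have hfc : ∀ y : Cfg n m, fc y = (!(y.1 ⟨n - 1, by omega⟩) && !(y.2 ⟨m - 1, by omega⟩)) :=
      fun y => rfl
    have h0 := DCaux.init fc hn hm hne hfc
    have h1 := DCaux.rounds fc hn hm hne hfc (m - 2) le_rfl
    have h := DCaux.steps_append h0 h1
    rw [DCaux.final_eq hn hm hme] at h
    exact h
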